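/- On the interior of any knot interval, the derivative of a B-spline basis function of degree p ≥ 1 satisfies N′_{i,p}(ξ) = (p/(ξ_{i+p} − ξ_i)) N_{i,p−1}(ξ) − (p/(ξ_{i+p+1} − ξ_{i+1})) N_{i+1,p−1}(ξ), where any term whose denominator is zero is taken to be 0; that is, this identity holds at every ξ lying in some open knot interval (ξ_j, ξ_{j+1}). -/

import Mathlib

/-- The B-spline basis functions `N_{i,p}` associated with a knot vector `ξ`,
defined by the Cox–de Boor recursion.  Terms with a zero denominator vanish
automatically since division by zero yields `0` in Lean. -/
noncomputable def bspline (ξ : ℤ → ℝ) : ℕ → ℤ → ℝ → ℝ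
  | 0 => fun i t => if ξ i ≤ t ∧ t < ξ (i + 1) then 1 else 0
  | p + 1 => fun i t =>
      (t - ξ i) / (ξ (i + (p : ℤ) + 1) - ξ i) * bspline ξ p i t
        + (ξ (i + (p : ℤ) + 2) - t) / (ξ (i + (p : ℤ) + 2) - ξ (i + 1)) *
            bspline ξ p (i + 1) t


lemma bspline_zero_eq (ξ : ℤ → ℝ) (hξ : Monotone ξ) (j i : ℤ)
    {t : ℝ} (ht : t ∈ Set.Ioo (ξ j) (ξ (j + 1))) :
    bspline ξ 0 i t = if ξ i ≤ ξ j ∧ ξ (j + 1) ≤ ξ (i + 1) then 1 else 0 := by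
  simp only [bspline]
  congr 1
  simp only [eq_iff_iff]
  constructor
  · rintro ⟨h1, h2⟩
    constructor
    · by_contra h
      push_neg at h
      have h' : (j : ℤ) < i := hξ.reflect_lt h
      have : ξ (j + 1) ≤ ξ i := hξ (by omega)
      linarith [ht.2]
    · by_contra h
      push_neg at h
      have h' : (i : ℤ) + 1 < j + 1 := hξ.reflect_lt h
      have : ξ (i + 1) ≤ ξ j := hξ (by omega)
      linarith [ht.1]
  · rintro ⟨h1, h2⟩
    exact ⟨le_of_lt (lt_of_le_of_lt h1 ht.1), lt_of_lt_of_le ht.2 h2⟩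

lemma bspline_zero_hasDerivAt (ξ : ℤ → ℝ) (hξ : Monotone ξ) (j i : ℤ)
    {x : ℝ} (hx : x ∈ Set.Ioo (ξ j) (ξ (j + 1))) :
    HasDerivAt (bspline ξ 0 i) 0 x := by
  have h : (fun t => bspline ξ 0 i t) =ᶠ[nhds x] fun _ => bspline ξ 0 i x := by
    filter_upwards [Ioo_mem_nhds hx.1 hx.2] with t ht
    rw [bspline_zero_eq ξ hξ j i ht, bspline_zero_eq ξ hξ j i hx]
  exact (hasDerivAt_const x _).congr_of_eventuallyEq h

noncomputable def bderiv (ξ : ℤ → ℝ) : ℕ → ℤ → ℝ → ℝ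
  | 0 => fun _ _ => 0
  | p + 1 => fun i x =>
      ((p : ℝ) + 1) / (ξ (i + (p : ℤ) + 1) - ξ i) * bspline ξ p i x
        - ((p : ℝ) + 1) / (ξ (i + (p : ℤ) + 2) - ξ (i + 1)) * bspline ξ p (i + 1) x

lemma alg (q x a b g c1 c2 c3 M1 M2 M3 : ℝ)
    (hab : a ≤ b) (hbc : b ≤ c2) (hc23 : c2 ≤ c3) :
    1 / (c2 - a) * ((x - a) / (c1 - a) * M1 + (c2 - x) / (c2 - b) * M2)
      + (x - a) / (c2 - a) * ((q + 1) / (c1 - a) * M1 - (q + 1) / (c2 - b) * M2)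
      + (-1 / (c3 - b) * ((x - b) / (c2 - b) * M2 + (c3 - x) / (c3 - g) * M3)
        + (c3 - x) / (c3 - b) * ((q + 1) / (c2 - b) * M2 - (q + 1) / (c3 - g) * M3))
    = (q + 2) / (c2 - a) * ((x - a) / (c1 - a) * M1 + (c2 - x) / (c2 - b) * M2)
      - (q + 2) / (c3 - b) * ((x - b) / (c2 - b) * M2 + (c3 - x) / (c3 - g) * M3) := by
  rcases eq_or_ne (c2 - b) 0 with h | h
  · rw [h]
    simp only [div_zero, mul_zero, zero_mul, add_zero, zero_add]
    ring
  · have hd1 : c2 - a ≠ 0 := by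
      intro h0; apply h; nlinarith [sub_eq_zero.mp h0]
    have hd2 : c3 - b ≠ 0 := by
      intro h0; apply h; nlinarith [sub_eq_zero.mp h0]
    simp only [div_eq_mul_inv]
    set u := (c1 - a)⁻¹ with hu
    set v := (c3 - g)⁻¹ with hv
    field_simp
    ring

lemma bspline_hasDerivAt_aux (ξ : ℤ → ℝ) (hξ : Monotone ξ) (j : ℤ)
    {x : ℝ} (hx : x ∈ Set.Ioo (ξ j) (ξ (j + 1))) :
    ∀ (p : ℕ) (i : ℤ), HasDerivAt (bspline ξ p i) (bderiv ξ p i x) x := by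
  intro p
  induction p with
  | zero => intro i; exact bspline_zero_hasDerivAt ξ hξ j i hx
  | succ p ih =>
    intro i
    have h1 : HasDerivAt (fun t : ℝ => (t - ξ i) / (ξ (i + (p : ℤ) + 1) - ξ i))
        (1 / (ξ (i + (p : ℤ) + 1) - ξ i)) x := by
      simpa using ((hasDerivAt_id x).sub_const (ξ i)).div_const _
    have h3 : HasDerivAt (fun t : ℝ => (ξ (i + (p : ℤ) + 2) - t) / (ξ (i + (p : ℤ) + 2) - ξ (i + 1)))
        (-1 / (ξ (i + (p : ℤ) + 2) - ξ (i + 1))) x := by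
      simpa using ((hasDerivAt_id x).const_sub (ξ (i + (p : ℤ) + 2))).div_const
        (ξ (i + (p : ℤ) + 2) - ξ (i + 1))
    have key := (h1.mul (ih i)).add (h3.mul (ih (i + 1)))
    have hfun : bspline ξ (p + 1) i = fun t =>
        (t - ξ i) / (ξ (i + (p : ℤ) + 1) - ξ i) * bspline ξ p i t
          + (ξ (i + (p : ℤ) + 2) - t) / (ξ (i + (p : ℤ) + 2) - ξ (i + 1)) *
              bspline ξ p (i + 1) t := by
      funext t; simp only [bspline]
    rw [hfun]
    refine key.congr_deriv (Eq.symm ?_)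
    cases p with
    | zero =>
      simp only [bderiv]
      push_cast
      ring
    | succ q =>
      simp only [bderiv]
      have e1 : i + 1 + (q : ℤ) + 1 = i + (q : ℤ) + 2 := by ring
      have e2 : i + 1 + (q : ℤ) + 2 = i + (q : ℤ) + 3 := by ring
      have e3 : i + ((q : ℤ) + 1) + 1 = i + (q : ℤ) + 2 := by ring
      have e4 : i + ((q : ℤ) + 1) + 2 = i + (q : ℤ) + 3 := by ring
      have hfi : bspline ξ (q + 1) i x =
          (x - ξ i) / (ξ (i + (q : ℤ) + 1) - ξ i) * bspline ξ q i x
            + (ξ (i + (q : ℤ) + 2) - x) / (ξ (i + (q : ℤ) + 2) - ξ (i + 1)) *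
                bspline ξ q (i + 1) x := by simp only [bspline]
      have hfi1 : bspline ξ (q + 1) (i + 1) x =
          (x - ξ (i + 1)) / (ξ (i + (q : ℤ) + 2) - ξ (i + 1)) * bspline ξ q (i + 1) x
            + (ξ (i + (q : ℤ) + 3) - x) / (ξ (i + (q : ℤ) + 3) - ξ (i + 2)) *
                bspline ξ q (i + 2) x := by
        have e5 : (i : ℤ) + 1 + 1 = i + 2 := by ring
        simp only [bspline, e1, e2, e5]
      push_cast
      rw [e3, e4, hfi, hfi1]
      have e5 : (i : ℤ) + 1 + 1 = i + 2 := by ring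
      simp only [e1, e2, e5]
      have := alg (q : ℝ) x (ξ i) (ξ (i + 1)) (ξ (i + 2)) (ξ (i + (q : ℤ) + 1))
        (ξ (i + (q : ℤ) + 2)) (ξ (i + (q : ℤ) + 3))
        (bspline ξ q i x) (bspline ξ q (i + 1) x) (bspline ξ q (i + 2) x)
        (hξ (by omega)) (hξ (by omega)) (hξ (by omega))
      linear_combination -this

/-- on the interior of any knot interval, the derivative of a
B-spline basis function of degree `p ≥ 1` satisfies
`N'_{i,p}(t) = p/(ξ_{i+p} - ξ_i) · N_{i,p-1}(t) - p/(ξ_{i+p+1} - ξ_{i+1}) · N_{i+1,p-1}(t)`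
(terms with zero denominator vanish, since division by zero yields `0`). -/
theorem bspline_deriv (ξ : ℤ → ℝ) (hξ : Monotone ξ) (p : ℕ) (hp : 1 ≤ p)
    (i : ℤ) (x : ℝ) (j : ℤ) (hx : x ∈ Set.Ioo (ξ j) (ξ (j + 1))) :
    HasDerivAt (bspline ξ p i)
      ((p : ℝ) / (ξ (i + (p : ℤ)) - ξ i) * bspline ξ (p - 1) i x
        - (p : ℝ) / (ξ (i + (p : ℤ) + 1) - ξ (i + 1)) * bspline ξ (p - 1) (i + 1) x)
      x := by
  obtain ⟨q, rfl⟩ : ∃ q, p = q + 1 := ⟨p - 1, by omega⟩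
  have h := bspline_hasDerivAt_aux ξ hξ j hx (q + 1) i
  simp only [bderiv] at h
  have e1 : i + ((q : ℤ) + 1) = i + (q : ℤ) + 1 := by ring
  have e2 : i + (q : ℤ) + 1 + 1 = i + (q : ℤ) + 2 := by ring
  simp only [Nat.add_sub_cancel, Nat.cast_add, Nat.cast_one, e1, e2]
  exact h
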